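/- Let S be a unital quantale and A, B, C elements (or matrices over S) with residuation x/y = sup { z | z * y ≤ x }. Define L₁ = (A* * B)/(C * A* * B). Then for every L, (A + L*C)* * B ≤ A* * B if and only if L ≤ L₁; in particular L₁ is the greatest L with (A + L₁*C)* * B = A* * B. -/

import Mathlib

open IsQuantale Quantale
theorem observer_gain_L1 {S : Type*} [Monoid S] [CompleteLattice S] [IsQuantale S]
    (A B C : S) :
    letI star : S → S := fun a => ⨆ n : ℕ, a ^ n
    letI rdiv : S → S → S := fun x y => sSup {z : S | z * y ≤ x}
    letI L₁ : S := rdiv (star A * B) (C * (star A * B))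
    (∀ L : S, star (A ⊔ L * C) * B ≤ star A * B ↔ L ≤ L₁) ∧
      star (A ⊔ L₁ * C) * B = star A * B := by
  beta_reduce
  set star : S → S := fun a => ⨆ n : ℕ, a ^ n with hstardef
  set L₁ : S := sSup {z : S | z * (C * (star A * B)) ≤ star A * B} with hL₁def
  -- basic facts
  have hres : ∀ L : S, L ≤ L₁ ↔ L * (C * (star A * B)) ≤ star A * B := fun L =>
    (leftMulResiduation_le_iff_mul_le : L ≤ (C * (star A * B)) ⇨ₗ (star A * B) ↔ _)
  have hstarmul : ∀ a : S, star a * B = ⨆ n : ℕ, a ^ n * B := fun a => iSup_mul_distrib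
  have hle_star : ∀ (a : S) (n : ℕ), a ^ n ≤ star a := fun a n => le_iSup (fun n => a ^ n) n
  have hB : ∀ a : S, B ≤ star a * B := fun a => by
    calc B = a ^ 0 * B := by simp
    _ ≤ star a * B := mul_le_mul_left (hle_star a 0) B
  have hA : ∀ a : S, a * (star a * B) ≤ star a * B := fun a => by
    rw [hstarmul, mul_iSup_distrib]
    apply iSup_le; intro n
    rw [← mul_assoc, ← pow_succ']
    exact le_iSup (fun n => a ^ n * B) (n + 1)
  have hSS : ∀ a : S, star a * (star a * B) ≤ star a * B := fun a => by
    conv_lhs => rw [hstarmul a, mul_iSup_distrib]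
    rw [hstarmul a]
    apply iSup_le; intro n
    show (⨆ m : ℕ, a ^ m) * (a ^ n * B) ≤ _
    rw [iSup_mul_distrib]
    apply iSup_le; intro m
    rw [← mul_assoc, ← pow_add]
    exact le_iSup (fun k => a ^ k * B) (m + n)
  have hmono : ∀ a b : S, a ≤ b → star a ≤ star b := fun a b h => by
    apply iSup_le; intro n
    exact le_trans (pow_le_pow_left' h n) (hle_star b n)
  have main : ∀ L : S, star (A ⊔ L * C) * B ≤ star A * B ↔ L ≤ L₁ := by
    intro L
    constructor
    · intro h
      rw [hres]
      calc L * (C * (star A * B)) = (L * C) * (star A * B) := by rw [mul_assoc]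
      _ ≤ star (A ⊔ L * C) * (star (A ⊔ L * C) * B) := by
          apply mul_le_mul'
          · exact le_trans le_sup_right (hle_star _ 1 |>.trans_eq' (pow_one _))
          · exact mul_le_mul_left (hmono A _ le_sup_left) B
      _ ≤ star (A ⊔ L * C) * B := hSS _
      _ ≤ star A * B := h
    · intro h
      rw [hres] at h
      have step : (A ⊔ L * C) * (star A * B) ≤ star A * B := by
        rw [sup_mul_distrib]
        apply sup_le (hA A)
        rw [mul_assoc]; exact h
      have key : ∀ n : ℕ, (A ⊔ L * C) ^ n * B ≤ star A * B := by
        intro n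
        induction n with
        | zero => simpa using hB A
        | succ n ih =>
          rw [pow_succ', mul_assoc]
          exact le_trans (mul_le_mul_right ih _) step
      rw [hstarmul]
      exact iSup_le key
  refine ⟨main, le_antisymm ((main L₁).mpr le_rfl) ?_⟩
  exact mul_le_mul_left (hmono A _ le_sup_left) B
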